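/- arXiv:1905.05070 — 4 statements merged into one kernel-verified Lean document; each statement's English description precedes it below -/
import Mathlib

section
/- Let α ∈ (0,1), let β_0 := 0 and β_j ∈ [0,1) for 1 ≤ j ≤ M. Then for every choice of mesh values U^0, …, U^M and every 1 ≤ m ≤ M, one has δ_t^α U^m = Σ_{j=0}^{m} κ_{m,j} V^j, where κ_{m,j} := (1 − β_j) D_t^α (Π^m Φ^j)(t_m). -/
noncomputable section
open Real MeasureTheory Finset

namespace L2scheme

/-- Linear Lagrange interpolant through `(x0,y0)`, `(x1,y1)`. -/
def lin (x0 y0 x1 y1 : ℝ) : ℝ → ℝ := fun s => y0 + (y1 - y0) * (s - x0) / (x1 - x0)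

/-- Quadratic Lagrange interpolant through `(x0,y0)`, `(x1,y1)`, `(x2,y2)`. -/
def quadInterp (x0 x1 x2 y0 y1 y2 : ℝ) : ℝ → ℝ := fun s =>
  y0 * ((s - x1) * (s - x2)) / ((x0 - x1) * (x0 - x2)) +
  y1 * ((s - x0) * (s - x2)) / ((x1 - x0) * (x1 - x2)) +
  y2 * ((s - x0) * (s - x1)) / ((x2 - x0) * (x2 - x1))

/-- The polynomial used by the interpolant `Π^m U` on the interval `(t_{j-1}, t_j)`:
for `m = 1` the linear interpolant at `t_0, t_1`; for `1 ≤ j < m` the quadratic interpolant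
at `t_{j-1}, t_j, t_{j+1}`; and for `j = m > 1` the quadratic interpolant at
`t_{m-2}, t_{m-1}, t_m`. -/
def piece (t U : ℕ → ℝ) (m j : ℕ) : ℝ → ℝ :=
  if m = 1 then lin (t 0) (U 0) (t 1) (U 1)
  else if j < m then quadInterp (t (j-1)) (t j) (t (j+1)) (U (j-1)) (U j) (U (j+1))
  else quadInterp (t (m-2)) (t (m-1)) (t m) (U (m-2)) (U (m-1)) (U m)

/-- The L2-type discrete fractional-derivative operator
`δ_t^α U^m := D_t^α (Π^m U)(t_m)`, written as a sum of integrals over the mesh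
subintervals `(t_{j-1}, t_j)`, `1 ≤ j ≤ m`. -/
def delta (α : ℝ) (t U : ℕ → ℝ) (m : ℕ) : ℝ :=
  (1 / Real.Gamma (1 - α)) * ∑ j ∈ Finset.Icc 1 m,
    ∫ s in (t (j-1))..(t j), (t m - s) ^ (-α) * deriv (piece t U m j) s

/-- The Caputo fractional derivative of order `α` of `v` at `x`. -/
def caputo (α : ℝ) (v : ℝ → ℝ) (x : ℝ) : ℝ :=
  (1 / Real.Gamma (1 - α)) * ∫ s in (0:ℝ)..x, (x - s) ^ (-α) * deriv v s

/-- The non-standard basis mesh functions `Φ^j`: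
`Φ^j(t_k) = 0` for `k < j`, `Φ^j(t_j) = 1`, `Φ^j(t_k) = β_k Φ^j(t_{k-1})` for `k > j`. -/
def Phi (β : ℕ → ℝ) (j : ℕ) : ℕ → ℝ
  | 0 => if j = 0 then 1 else 0
  | k + 1 => if k + 1 < j then 0 else if k + 1 = j then 1 else β (k + 1) * Phi β j k

/-- The hat mesh functions `φ^j`. -/
def hatf (j : ℕ) : ℕ → ℝ := fun k => if k = j then 1 else 0

/-- `V^0 := U^0` and `V^j := (U^j - β_j U^{j-1})/(1 - β_j)` for `j ≥ 1`. -/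
def Vv (β U : ℕ → ℝ) (j : ℕ) : ℝ :=
  if j = 0 then U 0 else (U j - β j * U (j - 1)) / (1 - β j)

/-- The coefficients `κ_{m,j} := (1 - β_j) D_t^α (Π^m Φ^j)(t_m)`. -/
def kappa (α : ℝ) (t β : ℕ → ℝ) (m j : ℕ) : ℝ := (1 - β j) * delta α t (Phi β j) m

/-- Property (★): `κ_{m,m} > 0` and `Σ_{j=0}^m κ_{m,j} = 0` for `1 ≤ m ≤ M`,
and `κ_{m,j} ≤ 0` for `0 ≤ j < m ≤ M`. -/
def Star (M : ℕ) (κ : ℕ → ℕ → ℝ) : Prop :=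
  (∀ m, 1 ≤ m → m ≤ M → 0 < κ m m ∧ ∑ j ∈ Finset.range (m + 1), κ m j = 0) ∧
  (∀ m j, j < m → m ≤ M → κ m j ≤ 0)

/-- `τ_j := t_j - t_{j-1}`. -/
def tau (t : ℕ → ℝ) (j : ℕ) : ℝ := t j - t (j - 1)

/-- `τ̃_1 := τ_1` and `τ̃_j := (τ_{j-1} + τ_j)/2` for `j ≥ 2`. -/
def taut (t : ℕ → ℝ) (j : ℕ) : ℝ := if j = 1 then tau t 1 else (tau t (j-1) + tau t j) / 2

/-- `ρ_j := τ_j / τ_{j-1}`. -/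
def rho (t : ℕ → ℝ) (j : ℕ) : ℝ := tau t j / tau t (j - 1)

/-- `σ_j := (τ_j - τ_{j-1})/(τ_j + τ_{j-1})`. -/
def sigma (t : ℕ → ℝ) (j : ℕ) : ℝ := (tau t j - tau t (j-1)) / (tau t j + tau t (j-1))

/-- `B := (α+2)/((1-α)(2-α))`. -/
def Bc (α : ℝ) : ℝ := (α + 2) / ((1 - α) * (2 - α))

/-- `A′ := 4α/((1-α)(2-α))`. -/
def Ac (α : ℝ) : ℝ := 4 * α / ((1 - α) * (2 - α))

/-- `ν := 1 - (1-α)/48`. -/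
def nuc (α : ℝ) : ℝ := 1 - (1 - α) / 48

/-- `B_m := τ̃_m^α Γ(1-α) 2^α δ_t^α φ^m(t_m)`. -/
def Bm (α : ℝ) (t : ℕ → ℝ) (m : ℕ) : ℝ :=
  taut t m ^ α * Real.Gamma (1 - α) * 2 ^ α * delta α t (hatf m) m

/-- `A_m := -τ̃_m^α Γ(1-α) 2^α δ_t^α φ^{m-1}(t_m)`. -/
def Am (α : ℝ) (t : ℕ → ℝ) (m : ℕ) : ℝ :=
  -(taut t m ^ α * Real.Gamma (1 - α) * 2 ^ α * delta α t (hatf (m-1)) m)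

/-- `F_m := τ̃_m^α Γ(1-α) 2^α δ_t^α (φ^{m-2} + φ^{m-1} + φ^m)(t_m)`. -/
def Fm (α : ℝ) (t : ℕ → ℝ) (m : ℕ) : ℝ :=
  taut t m ^ α * Real.Gamma (1 - α) * 2 ^ α *
    delta α t (fun k => hatf (m-2) k + hatf (m-1) k + hatf m k) m

/-- A temporal mesh `0 = t_0 < t_1 < ⋯ < t_M = T`. -/
def Mesh (t : ℕ → ℝ) (M : ℕ) (T : ℝ) : Prop :=
  t 0 = 0 ∧ t M = T ∧ ∀ j, j < M → t j < t (j + 1)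

/-- `σ_j ≥ σ_{j+1} ≥ 0` for all `j ≥ 2`. -/
def SigmaDecr (t : ℕ → ℝ) (M : ℕ) : Prop :=
  ∀ j, 2 ≤ j → j ≤ M → 0 ≤ sigma t j ∧ (j + 1 ≤ M → sigma t (j + 1) ≤ sigma t j)

/-- Quasi-graded mesh of degree `r` with constants `cm, cp`:
`τ_1 ≃ M^{-r}`, `τ_j ≃ t_j/j` and `t_j ≃ τ_1 j^r` for `1 ≤ j ≤ M`. -/
def QuasiGraded (t : ℕ → ℝ) (M : ℕ) (r cm cp : ℝ) : Prop :=
  (cm * (M : ℝ) ^ (-r) ≤ tau t 1 ∧ tau t 1 ≤ cp * (M : ℝ) ^ (-r)) ∧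
  ∀ j, 1 ≤ j → j ≤ M →
    (cm * (t j / j) ≤ tau t j ∧ tau t j ≤ cp * (t j / j)) ∧
    (cm * (tau t 1 * (j : ℝ) ^ r) ≤ t j ∧ t j ≤ cp * (tau t 1 * (j : ℝ) ^ r))

/-- The stability bound `𝒰^j(τ_1; γ)`. -/
def Ubound (α γ τ1 tj : ℝ) : ℝ :=
  if 0 < γ then τ1 * tj ^ (α - 1)
  else if γ = 0 then τ1 * tj ^ (α - 1) * (1 + Real.log (tj / τ1))
  else τ1 * tj ^ (α - 1) * (τ1 / tj) ^ γ

/-- The pointwise error bound `ℰ^m`. -/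
def Ebound (α r : ℝ) (M : ℕ) (t1 tm : ℝ) : ℝ :=
  if r < 3 - α then (M : ℝ) ^ (-r) * tm ^ (α - 1)
  else if r = 3 - α then (M : ℝ) ^ (α - 3) * tm ^ (α - 1) * (1 + Real.log (tm / t1))
  else (M : ℝ) ^ (α - 3) * tm ^ (α - (3 - α) / r)

/-- `η(σ) := (1-σ²)(B/A′ - σ/(2(1+σ)))`. -/
def eta (α σ : ℝ) : ℝ := (1 - σ ^ 2) * (Bc α / Ac α - σ / (2 * (1 + σ)))

/-- `β_1 := β_2`, `β_j := (θ/2) ν / η(σ_j)` for `j ≥ 2` (and `β_0 := 0`). -/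
def betaG (α θ : ℝ) (t : ℕ → ℝ) (j : ℕ) : ℝ :=
  if j = 0 then 0
  else if j = 1 then θ / 2 * nuc α / eta α (sigma t 2)
  else θ / 2 * nuc α / eta α (sigma t j)

end L2scheme

open L2scheme

namespace L2aux

lemma quad_poly (x0 x1 x2 y0 y1 y2 : ℝ) :
    ∃ A B C : ℝ, quadInterp x0 x1 x2 y0 y1 y2 = fun s => A*s^2 + B*s + C := by
  refine ⟨y0 * ((x0-x1)*(x0-x2))⁻¹ + y1 * ((x1-x0)*(x1-x2))⁻¹ + y2 * ((x2-x0)*(x2-x1))⁻¹,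
    -(y0 * ((x0-x1)*(x0-x2))⁻¹ * (x1+x2)) - y1*((x1-x0)*(x1-x2))⁻¹*(x0+x2)
      - y2*((x2-x0)*(x2-x1))⁻¹*(x0+x1),
    y0 * ((x0-x1)*(x0-x2))⁻¹ * (x1*x2) + y1*((x1-x0)*(x1-x2))⁻¹*(x0*x2)
      + y2*((x2-x0)*(x2-x1))⁻¹*(x0*x1), ?_⟩
  funext s; simp only [quadInterp, div_eq_mul_inv]; ring

lemma lin_poly (x0 y0 x1 y1 : ℝ) :
    ∃ A B C : ℝ, lin x0 y0 x1 y1 = fun s => A*s^2 + B*s + C := by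
  refine ⟨0, (y1-y0)*(x1-x0)⁻¹, y0 - (y1-y0)*(x1-x0)⁻¹*x0, ?_⟩
  funext s; simp only [lin, div_eq_mul_inv]; ring

lemma piece_poly (t U : ℕ → ℝ) (m j : ℕ) :
    ∃ A B C : ℝ, piece t U m j = fun s => A*s^2 + B*s + C := by
  unfold piece
  split_ifs
  · exact lin_poly _ _ _ _
  · exact quad_poly _ _ _ _ _ _
  · exact quad_poly _ _ _ _ _ _

lemma hasDerivAt_quad (A B C s : ℝ) :
    HasDerivAt (fun x : ℝ => A*x^2 + B*x + C) (2*A*s + B) s := by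
  have h := (((hasDerivAt_pow 2 s).const_mul A).add ((hasDerivAt_id s).const_mul B)).add_const C
  have h' : HasDerivAt (fun x : ℝ => A*x^2 + B*x + C) (A*(2*s)+B) s := by simpa using h
  have he : A*(2*s)+B = 2*A*s + B := by ring
  exact he ▸ h'

lemma deriv_quad (A B C : ℝ) :
    deriv (fun x : ℝ => A*x^2 + B*x + C) = fun s => 2*A*s + B :=
  funext fun s => (hasDerivAt_quad A B C s).deriv

lemma lin_linear (F : Finset ℕ) (c a b : ℕ → ℝ) (x0 x1 s : ℝ) :
    lin x0 (∑ i ∈ F, c i * a i) x1 (∑ i ∈ F, c i * b i) s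
      = ∑ i ∈ F, c i * lin x0 (a i) x1 (b i) s := by
  simp only [lin, div_eq_mul_inv, ← Finset.sum_sub_distrib, Finset.sum_mul,
    ← Finset.sum_add_distrib]
  exact Finset.sum_congr rfl fun i _ => by ring

lemma quad_linear (F : Finset ℕ) (c a b d : ℕ → ℝ) (x0 x1 x2 s : ℝ) :
    quadInterp x0 x1 x2 (∑ i ∈ F, c i * a i) (∑ i ∈ F, c i * b i) (∑ i ∈ F, c i * d i) s
      = ∑ i ∈ F, c i * quadInterp x0 x1 x2 (a i) (b i) (d i) s := by
  simp only [quadInterp, div_eq_mul_inv, Finset.sum_mul, ← Finset.sum_add_distrib]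
  exact Finset.sum_congr rfl fun i _ => by ring

lemma piece_linear (t : ℕ → ℝ) (m j : ℕ) (F : Finset ℕ) (c : ℕ → ℝ) (Ui : ℕ → ℕ → ℝ) (s : ℝ) :
    piece t (fun k => ∑ i ∈ F, c i * Ui i k) m j s = ∑ i ∈ F, c i * piece t (Ui i) m j s := by
  unfold piece
  split_ifs
  · exact lin_linear F c (fun i => Ui i 0) (fun i => Ui i 1) _ _ s
  · exact quad_linear F c _ _ _ _ _ _ s
  · exact quad_linear F c _ _ _ _ _ _ s

lemma integrand_integrable (α : ℝ) (hα1 : α < 1) (a b cm A B : ℝ) :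
    IntervalIntegrable (fun s => (cm - s) ^ (-α) * (2*A*s + B)) volume a b := by
  have h1 : IntervalIntegrable (fun x : ℝ => x ^ (-α)) volume (cm - a) (cm - b) :=
    intervalIntegral.intervalIntegrable_rpow' (by linarith)
  have h2 := h1.comp_sub_left cm
  simp only [sub_sub_cancel] at h2
  exact h2.mul_continuousOn (by fun_prop)

lemma integral_linear (α : ℝ) (hα1 : α < 1) (t : ℕ → ℝ) (m j : ℕ)
    (F : Finset ℕ) (c : ℕ → ℝ) (Ui : ℕ → ℕ → ℝ) :
    (∫ s in (t (j-1))..(t j),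
        (t m - s) ^ (-α) * deriv (piece t (fun k => ∑ i ∈ F, c i * Ui i k) m j) s)
      = ∑ i ∈ F, c i * ∫ s in (t (j-1))..(t j),
          (t m - s) ^ (-α) * deriv (piece t (Ui i) m j) s := by
  choose A B C hABC using fun i => piece_poly t (Ui i) m j
  have hW : piece t (fun k => ∑ i ∈ F, c i * Ui i k) m j
      = fun s => (∑ i ∈ F, c i * A i)*s^2 + (∑ i ∈ F, c i * B i)*s
          + (∑ i ∈ F, c i * C i) := by
    funext s
    rw [piece_linear]
    calc ∑ i ∈ F, c i * piece t (Ui i) m j s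
        = ∑ i ∈ F, c i * (A i * s^2 + B i * s + C i) :=
          Finset.sum_congr rfl fun i _ => by rw [hABC i]
      _ = _ := by
          simp only [Finset.sum_mul, ← Finset.sum_add_distrib]
          exact Finset.sum_congr rfl fun i _ => by ring
  rw [hW, deriv_quad]
  have hpt : ∀ s : ℝ, (t m - s) ^ (-α) * (2*(∑ i ∈ F, c i * A i)*s + (∑ i ∈ F, c i * B i))
      = ∑ i ∈ F, c i * ((t m - s) ^ (-α) * (2*(A i)*s + B i)) := by
    intro s
    rw [Finset.mul_sum, Finset.sum_mul, ← Finset.sum_add_distrib, Finset.mul_sum]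
    exact Finset.sum_congr rfl fun i _ => by ring
  simp only [hpt]
  rw [intervalIntegral.integral_finset_sum (fun i _ =>
    (integrand_integrable α hα1 (t (j-1)) (t j) (t m) (A i) (B i)).const_mul (c i))]
  refine Finset.sum_congr rfl fun i _ => ?_
  rw [intervalIntegral.integral_const_mul, hABC i, deriv_quad]

lemma delta_linear (α : ℝ) (hα1 : α < 1) (t : ℕ → ℝ) (m : ℕ)
    (F : Finset ℕ) (c : ℕ → ℝ) (Ui : ℕ → ℕ → ℝ) :
    delta α t (fun k => ∑ i ∈ F, c i * Ui i k) m = ∑ i ∈ F, c i * delta α t (Ui i) m := by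
  unfold delta
  simp only [integral_linear α hα1 t m _ F c Ui]
  rw [Finset.sum_comm, Finset.mul_sum]
  refine Finset.sum_congr rfl fun i _ => ?_
  rw [← Finset.mul_sum]
  ring

lemma Phi_zero_of_lt (β : ℕ → ℝ) (j k : ℕ) (h : k < j) : Phi β j k = 0 := by
  cases k with
  | zero => simp only [Phi]; rw [if_neg (by omega)]
  | succ k => simp only [Phi]; rw [if_pos h]

lemma Phi_succ (β : ℕ → ℝ) (j k : ℕ) :
    Phi β j (k+1) = if j = k+1 then 1 else β (k+1) * Phi β j k := by
  by_cases h1 : k + 1 < j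
  · rw [if_neg (by omega)]
    rw [Phi_zero_of_lt β j k (by omega), mul_zero]
    simp only [Phi]
    rw [if_pos h1]
  · by_cases h2 : k + 1 = j
    · simp only [Phi]
      rw [if_neg h1, if_pos h2, if_pos h2.symm]
    · simp only [Phi]
      rw [if_neg h1, if_neg h2, if_neg (by omega)]

lemma repr_lemma (β U : ℕ → ℝ) (M m : ℕ) (hβ0 : β 0 = 0)
    (hβ : ∀ j, 1 ≤ j → j ≤ M → β j < 1) (hmM : m ≤ M) :
    ∀ k, k ≤ m → U k = ∑ j ∈ Finset.range (m+1), ((1 - β j) * Vv β U j) * Phi β j k := by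
  intro k
  induction k with
  | zero =>
    intro _
    have : ∀ j, Phi β j 0 = if j = 0 then 1 else 0 := fun j => by simp [Phi]
    simp only [this, mul_ite, mul_one, mul_zero]
    rw [Finset.sum_ite_eq' (Finset.range (m+1)) 0]
    simp [Vv, hβ0]
  | succ k ih =>
    intro hk
    have hk' : k ≤ m := by omega
    have hc : ∀ j ∈ Finset.range (m+1),
        ((1 - β j) * Vv β U j) * Phi β j (k+1)
          = (if j = k+1 then (1 - β j) * Vv β U j else 0)
            + β (k+1) * (((1 - β j) * Vv β U j) * Phi β j k) := by
      intro j _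
      rw [Phi_succ]
      by_cases h : j = k+1
      · subst h
        rw [if_pos rfl, if_pos rfl, Phi_zero_of_lt β (k+1) k (by omega)]
        ring
      · rw [if_neg h, if_neg h]
        ring
    rw [Finset.sum_congr rfl hc, Finset.sum_add_distrib,
      Finset.sum_ite_eq' (Finset.range (m+1)) (k+1),
      if_pos (Finset.mem_range.mpr (by omega)), ← Finset.mul_sum, ← ih hk']
    have hb : β (k+1) < 1 := hβ (k+1) (by omega) (by omega)
    have hb' : (1 : ℝ) - β (k+1) ≠ 0 := by linarith
    simp only [Vv, Nat.succ_ne_zero, if_false, Nat.add_sub_cancel]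
    field_simp
    ring

end L2aux

/-- STATEMENT 1 proof. -/
theorem statement1 (α T : ℝ) (hα : α ∈ Set.Ioo (0:ℝ) 1) (M : ℕ) (hM : 1 ≤ M)
    (t : ℕ → ℝ) (ht : Mesh t M T)
    (β : ℕ → ℝ) (hβ0 : β 0 = 0) (hβ : ∀ j, 1 ≤ j → j ≤ M → 0 ≤ β j ∧ β j < 1)
    (U : ℕ → ℝ) (m : ℕ) (hm : 1 ≤ m) (hmM : m ≤ M) :
    delta α t U m = ∑ j ∈ Finset.range (m + 1), kappa α t β m j * Vv β U j := by
  have hβ' : ∀ j, 1 ≤ j → j ≤ M → β j < 1 := fun j h1 h2 => (hβ j h1 h2).2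
  have hrepr := L2aux.repr_lemma β U M m hβ0 hβ' hmM
  have key : delta α t U m
      = delta α t (fun k => ∑ i ∈ Finset.range (m+1), ((1 - β i) * Vv β U i) * Phi β i k) m := by
    unfold delta
    congr 1
    refine Finset.sum_congr rfl fun j hj => ?_
    have hj1 := Finset.mem_Icc.mp hj
    have hp : piece t U m j
        = piece t (fun k => ∑ i ∈ Finset.range (m+1), ((1 - β i) * Vv β U i) * Phi β i k) m j := by
      unfold piece
      split_ifs with h1 h2
      · rw [hrepr 0 (by omega), hrepr 1 (by omega)]
      · rw [hrepr (j-1) (by omega), hrepr j (by omega), hrepr (j+1) (by omega)]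
      · rw [hrepr (m-2) (by omega), hrepr (m-1) (by omega), hrepr m le_rfl]
    rw [hp]
  rw [key, L2aux.delta_linear α hα.2 t m (Finset.range (m+1))
    (fun i => (1 - β i) * Vv β U i) (fun i => Phi β i)]
  refine Finset.sum_congr rfl fun j _ => ?_
  unfold kappa
  ring
end
end

section
/- Let α ∈ (0,1) and let the temporal mesh be uniform: τ_j = τ = T/M for all 1 ≤ j ≤ M. Then B_1 = A_1 > 0, and for every 2 ≤ m ≤ M: B_m = B; 0 ≤ A′ − A_m ≤ α/24, so in particular A_m ≥ ν A′; and F_m ≤ 1 + (A′ − A_m). -/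
noncomputable section
open Real MeasureTheory Finset

open L2scheme


section helperLemmas
open Set intervalIntegral

lemma hasDerivAt_quadInterp (x0 x1 x2 y0 y1 y2 s : ℝ) :
    HasDerivAt (quadInterp x0 x1 x2 y0 y1 y2)
      (y0 * ((s - x1) + (s - x2)) / ((x0 - x1) * (x0 - x2)) +
       y1 * ((s - x0) + (s - x2)) / ((x1 - x0) * (x1 - x2)) +
       y2 * ((s - x0) + (s - x1)) / ((x2 - x0) * (x2 - x1))) s := by
  have h : ∀ a b : ℝ, HasDerivAt (fun s : ℝ => (s - a) * (s - b)) ((s - a) + (s - b)) s := by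
    intro a b
    have := (((hasDerivAt_id s).sub_const a).mul ((hasDerivAt_id s).sub_const b))
    exact this.congr_deriv (by simp only [id_eq, one_mul, mul_one]; ring)
  have h0 := (((h x1 x2).const_mul y0).div_const ((x0 - x1) * (x0 - x2)))
  have h1 := (((h x0 x2).const_mul y1).div_const ((x1 - x0) * (x1 - x2)))
  have h2 := (((h x0 x1).const_mul y2).div_const ((x2 - x0) * (x2 - x1)))
  have := (h0.add h1).add h2
  exact this

lemma deriv_quadInterp (x0 x1 x2 y0 y1 y2 : ℝ) :
    deriv (quadInterp x0 x1 x2 y0 y1 y2) = fun s =>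
      (y0 * ((s - x1) + (s - x2)) / ((x0 - x1) * (x0 - x2)) +
       y1 * ((s - x0) + (s - x2)) / ((x1 - x0) * (x1 - x2)) +
       y2 * ((s - x0) + (s - x1)) / ((x2 - x0) * (x2 - x1))) := by
  funext s; exact (hasDerivAt_quadInterp x0 x1 x2 y0 y1 y2 s).deriv

lemma deriv_lin (x0 y0 x1 y1 : ℝ) :
    deriv (lin x0 y0 x1 y1) = fun _ => (y1 - y0) / (x1 - x0) := by
  funext s
  have : HasDerivAt (lin x0 y0 x1 y1) ((y1 - y0) * 1 / (x1 - x0)) s := by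
    exact (((((hasDerivAt_id s).sub_const x0)).const_mul (y1 - y0)).div_const (x1 - x0)).const_add y0
  simpa using this.deriv

lemma int_rpow_linear {α : ℝ} (hα0 : 0 < α) (hα1 : α < 1) {A B : ℝ} (hA : 0 ≤ A) (hB : 0 ≤ B)
    (p q : ℝ) :
    ∫ v in A..B, v ^ (-α) * (p + q * v)
      = p * (B ^ (1-α) - A ^ (1-α)) / (1-α) + q * (B ^ (2-α) - A ^ (2-α)) / (2-α) := by
  have h1 : Set.EqOn (fun v : ℝ => v ^ (-α) * (p + q*v))
      (fun v => p * v^(-α) + q * v^(1-α)) (Set.uIcc A B) := by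
    intro v hv
    have hv0 : 0 ≤ v := by
      rcases Set.mem_uIcc.mp hv with ⟨h1,_⟩|⟨h1,_⟩ <;> linarith
    rcases eq_or_lt_of_le hv0 with h|h
    · simp [← h, Real.zero_rpow (by linarith : -α ≠ 0),
        Real.zero_rpow (by intro hc; rw [sub_eq_zero] at hc; linarith : (1:ℝ)-α ≠ 0)]
    · have hv1 : v ^ ((1:ℝ)-α) = v^(-α) * v := by
        rw [show (1:ℝ)-α = -α + 1 by ring, Real.rpow_add_one h.ne']
      simp only [hv1]; ring
  rw [intervalIntegral.integral_congr h1]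
  have i1 : IntervalIntegrable (fun v : ℝ => p * v ^ (-α)) volume A B :=
    (intervalIntegral.intervalIntegrable_rpow' (by linarith)).const_mul p
  have i2 : IntervalIntegrable (fun v : ℝ => q * v ^ ((1:ℝ)-α)) volume A B :=
    (intervalIntegral.intervalIntegrable_rpow' (by linarith)).const_mul q
  rw [intervalIntegral.integral_add i1 i2, intervalIntegral.integral_const_mul,
    intervalIntegral.integral_const_mul, integral_rpow (Or.inl (by linarith)),
    integral_rpow (Or.inl (by linarith))]
  rw [show -α + 1 = 1 - α by ring, show (1:ℝ) - α + 1 = 2 - α by ring]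
  ring

lemma int_weight_linear {α : ℝ} (hα0 : 0 < α) (hα1 : α < 1) {A B c : ℝ} (hA : A ≤ c) (hB : B ≤ c)
    (p q : ℝ) :
    ∫ s in A..B, (c - s) ^ (-α) * (p + q * s)
      = (p + q*c) * ((c-A)^(1-α) - (c-B)^(1-α)) / (1-α)
        - q * ((c-A)^(2-α) - (c-B)^(2-α)) / (2-α) := by
  have h1 : (fun s : ℝ => (c - s) ^ (-α) * (p + q * s))
      = fun s => (c - s) ^ (-α) * ((p + q*c) + (-q) * (c - s)) := by
    funext s
    have : (p + q * s) = ((p + q*c) + (-q) * (c - s)) := by ring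
    rw [this]
  rw [h1]
  have hcomp : (∫ s in A..B, (c - s)^(-α) * ((p + q*c) + (-q) * (c - s)))
      = ∫ u in (c-B)..(c-A), u^(-α) * ((p + q*c) + (-q) * u) :=
    intervalIntegral.integral_comp_sub_left (fun u => u^(-α) * ((p + q*c) + (-q)*u)) c
  rw [hcomp, int_rpow_linear hα0 hα1 (by linarith) (by linarith)]
  ring

/-- value of one piece integral in units of `τ^(-α)` -/
def Jt (α y0 y1 y2 d e : ℝ) : ℝ :=
  (y0*(2*d+1) - 2*y1*(2*d+2) + y2*(2*d+3)) * ((e+1)^(1-α) - e^(1-α)) / (2*(1-α))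
    - (y0 - 2*y1 + y2) * ((e+1)^(2-α) - e^(2-α)) / (2-α)

set_option maxHeartbeats 1000000 in
lemma quad_int {α : ℝ} (hα0 : 0 < α) (hα1 : α < 1) {τ c : ℝ} (hτ : 0 < τ)
    (y0 y1 y2 d e : ℝ) (hd : 0 ≤ d) (he : 0 ≤ e)
    {x0 x1 x2 A B : ℝ}
    (hx0 : x0 = c - (d+2)*τ) (hx1 : x1 = c - (d+1)*τ) (hx2 : x2 = c - d*τ)
    (hA : A = c - (e+1)*τ) (hB : B = c - e*τ) :
    ∫ s in A..B, (c - s) ^ (-α) * deriv (quadInterp x0 x1 x2 y0 y1 y2) s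
      = τ ^ (-α) * Jt α y0 y1 y2 d e := by
  have h1α : (0:ℝ) < 1 - α := by linarith
  have h2α : (0:ℝ) < 2 - α := by linarith
  have hτ' : τ ≠ 0 := hτ.ne'
  set P : ℝ := (y0*(2*d+1) - 2*y1*(2*d+2) + y2*(2*d+3)) / (2*τ) with hP
  set q : ℝ := (y0 - 2*y1 + y2) / (τ*τ) with hq
  have hfun : (fun s : ℝ => (c - s) ^ (-α) * deriv (quadInterp x0 x1 x2 y0 y1 y2) s)
      = fun s => (c - s) ^ (-α) * ((P - q*c) + q * s) := by
    funext s
    rw [deriv_quadInterp]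
    congr 1
    rw [show x0 - x1 = -τ by rw [hx0, hx1]; ring,
        show x0 - x2 = -(2*τ) by rw [hx0, hx2]; ring,
        show x1 - x0 = τ by rw [hx1, hx0]; ring,
        show x1 - x2 = -τ by rw [hx1, hx2]; ring,
        show x2 - x0 = 2*τ by rw [hx2, hx0]; ring,
        show x2 - x1 = τ by rw [hx2, hx1]; ring,
        hx0, hx1, hx2, hP, hq]
    field_simp
    ring
  rw [hfun, int_weight_linear hα0 hα1 (by nlinarith) (by nlinarith),
    show c - A = (e+1)*τ by rw [hA]; ring, show c - B = e*τ by rw [hB]; ring]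
  simp only [Real.mul_rpow (show (0:ℝ) ≤ e + 1 by linarith) hτ.le, Real.mul_rpow he hτ.le]
  have hτ1 : τ ^ ((1:ℝ)-α) = τ^(-α) * τ := by
    rw [show (1:ℝ)-α = -α + 1 by ring, Real.rpow_add_one hτ']
  have hτ2 : τ ^ ((2:ℝ)-α) = τ^(-α) * τ * τ := by
    rw [show (2:ℝ)-α = -α + 1 + 1 by ring, Real.rpow_add_one hτ', Real.rpow_add_one hτ']
  rw [hτ1, hτ2, hP, hq, Jt]
  field_simp
  ring

lemma term_zero (α : ℝ) (x0 x1 x2 A B c : ℝ) :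
    ∫ s in A..B, (c - s)^(-α) * deriv (quadInterp x0 x1 x2 0 0 0) s = 0 := by
  have h : deriv (quadInterp x0 x1 x2 0 0 0) = fun _ => 0 := by
    rw [deriv_quadInterp]; funext s; simp
  simp [h]

lemma delta_uniform {α : ℝ} (hα0 : 0 < α) (hα1 : α < 1) {τ : ℝ} (hτ : 0 < τ) (t : ℕ → ℝ) (M : ℕ)
    (ht : ∀ j, j ≤ M → t j = τ * j) (k : ℕ) (hk : k + 2 ≤ M) (U : ℕ → ℝ)
    (hU : ∀ i, i < k → U i = 0) :
    delta α t U (k+2) = (1 / Real.Gamma (1-α)) * (τ^(-α) *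
      (Jt α (U k) (U (k+1)) (U (k+2)) 0 1 + Jt α (U k) (U (k+1)) (U (k+2)) 0 0
        + (if 1 ≤ k then Jt α 0 (U k) (U (k+1)) 1 2 else 0)
        + (if 2 ≤ k then Jt α 0 0 (U k) 2 3 else 0))) := by
  have hdiff : ∀ (i : ℕ) (x : ℝ), i ≤ k + 2 → ((i:ℝ) + x = ((k:ℝ)+2)) → t i = t (k+2) - x*τ := by
    intro i x hi hx
    rw [ht i (le_trans hi hk), ht _ hk, show (i:ℝ) = ((k:ℝ)+2) - x by push_cast at hx; linarith]
    push_cast; ring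
  simp only [delta]
  congr 1
  match k with
  | 0 =>
    rw [show Finset.Icc 1 2 = {1, 2} from rfl, Finset.sum_pair (by omega)]
    rw [show piece t U 2 1 = quadInterp (t 0) (t 1) (t 2) (U 0) (U 1) (U 2) by
        simp only [piece]; rw [if_neg (by omega), if_pos (by omega)],
      show piece t U 2 2 = quadInterp (t 0) (t 1) (t 2) (U 0) (U 1) (U 2) by
        simp only [piece]; rw [if_neg (by omega), if_neg (by omega)]]
    rw [quad_int hα0 hα1 hτ (U 0) (U 1) (U 2) 0 1 le_rfl (by norm_num)
        (hdiff _ _ (by omega) (by push_cast; ring)) (hdiff _ _ (by omega) (by push_cast; ring))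
        (hdiff _ _ (by omega) (by push_cast; ring)) (hdiff _ _ (by omega) (by push_cast; ring))
        (hdiff _ _ (by omega) (by push_cast; ring)),
      quad_int hα0 hα1 hτ (U 0) (U 1) (U 2) 0 0 le_rfl le_rfl
        (hdiff _ _ (by omega) (by push_cast; ring)) (hdiff _ _ (by omega) (by push_cast; ring))
        (hdiff _ _ (by omega) (by push_cast; ring)) (hdiff _ _ (by omega) (by push_cast; ring))
        (hdiff _ _ (by omega) (by push_cast; ring))]
    norm_num; ring
  | 1 =>
    rw [show Finset.Icc 1 3 = {1, 2, 3} from rfl]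
    rw [Finset.sum_insert (by decide), Finset.sum_pair (by omega)]
    rw [show piece t U 3 1 = quadInterp (t 0) (t 1) (t 2) 0 (U 1) (U 2) by
        simp only [piece]; rw [if_neg (by omega), if_pos (by omega), hU 0 (by omega)],
      show piece t U 3 2 = quadInterp (t 1) (t 2) (t 3) (U 1) (U 2) (U 3) by
        simp only [piece]; rw [if_neg (by omega), if_pos (by omega)],
      show piece t U 3 3 = quadInterp (t 1) (t 2) (t 3) (U 1) (U 2) (U 3) by
        simp only [piece]; rw [if_neg (by omega), if_neg (by omega)]]
    rw [quad_int hα0 hα1 hτ 0 (U 1) (U 2) 1 2 (by norm_num) (by norm_num)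
        (hdiff _ _ (by omega) (by push_cast; ring)) (hdiff _ _ (by omega) (by push_cast; ring))
        (hdiff _ _ (by omega) (by push_cast; ring)) (hdiff _ _ (by omega) (by push_cast; ring))
        (hdiff _ _ (by omega) (by push_cast; ring)),
      quad_int hα0 hα1 hτ (U 1) (U 2) (U 3) 0 1 le_rfl (by norm_num)
        (hdiff _ _ (by omega) (by push_cast; ring)) (hdiff _ _ (by omega) (by push_cast; ring))
        (hdiff _ _ (by omega) (by push_cast; ring)) (hdiff _ _ (by omega) (by push_cast; ring))
        (hdiff _ _ (by omega) (by push_cast; ring)),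
      quad_int hα0 hα1 hτ (U 1) (U 2) (U 3) 0 0 le_rfl le_rfl
        (hdiff _ _ (by omega) (by push_cast; ring)) (hdiff _ _ (by omega) (by push_cast; ring))
        (hdiff _ _ (by omega) (by push_cast; ring)) (hdiff _ _ (by omega) (by push_cast; ring))
        (hdiff _ _ (by omega) (by push_cast; ring))]
    norm_num; ring
  | (n+2) =>
    rw [← Finset.sum_subset (show {n+1, n+2, n+3, n+4} ⊆ Finset.Icc 1 (n+2+2) by
        intro x hx; simp only [Finset.mem_insert, Finset.mem_singleton] at hx
        simp only [Finset.mem_Icc]; omega)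
      (by
        intro j hj hjn
        simp only [Finset.mem_Icc] at hj
        simp only [Finset.mem_insert, Finset.mem_singleton] at hjn
        show (∫ s in (t (j-1))..(t j), (t (n+2+2) - s) ^ (-α) * deriv (piece t U (n+2+2) j) s) = 0
        rw [show piece t U (n+2+2) j
            = quadInterp (t (j-1)) (t j) (t (j+1)) 0 0 0 by
          simp only [piece]; rw [if_neg (by omega), if_pos (by omega),
            hU (j-1) (by omega), hU j (by omega), hU (j+1) (by omega)]]
        exact term_zero α _ _ _ _ _ _)]
    rw [Finset.sum_insert (by simp only [Finset.mem_insert, Finset.mem_singleton]; omega), Finset.sum_insert (by simp only [Finset.mem_insert, Finset.mem_singleton]; omega),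
      Finset.sum_pair (by omega)]
    rw [show piece t U (n+2+2) (n+1) = quadInterp (t n) (t (n+1)) (t (n+2)) 0 0 (U (n+2)) by
        simp only [piece]; rw [if_neg (by omega), if_pos (by omega),
          show n+1-1 = n by omega, hU n (by omega), hU (n+1) (by omega)],
      show piece t U (n+2+2) (n+2) = quadInterp (t (n+1)) (t (n+2)) (t (n+3)) 0 (U (n+2)) (U (n+3)) by
        simp only [piece]; rw [if_neg (by omega), if_pos (by omega),
          show n+2-1 = n+1 by omega, hU (n+1) (by omega)],
      show piece t U (n+2+2) (n+3) = quadInterp (t (n+2)) (t (n+3)) (t (n+4)) (U (n+2)) (U (n+3)) (U (n+4)) by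
        simp only [piece]; rw [if_neg (by omega), if_pos (by omega), show n+3-1 = n+2 by omega],
      show piece t U (n+2+2) (n+4) = quadInterp (t (n+2)) (t (n+3)) (t (n+4)) (U (n+2)) (U (n+3)) (U (n+4)) by
        simp only [piece]; rw [if_neg (by omega), if_neg (by omega),
          show n+2+2-2 = n+2 by omega, show n+2+2-1 = n+3 by omega, show n+2+2 = n+4 by omega]]
    have c4 : ((n:ℝ)+4) = ((n:ℝ)+2)+2 := by ring
    simp only [show n+1-1 = n from by omega, show n+2-1 = n+1 from by omega,
      show n+3-1 = n+2 from by omega, show n+4-1 = n+3 from by omega]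
    rw [quad_int hα0 hα1 hτ 0 0 (U (n+2)) 2 3 (by norm_num) (by norm_num)
        (hdiff _ _ (by omega) (by push_cast; ring)) (hdiff _ _ (by omega) (by push_cast; ring))
        (hdiff _ _ (by omega) (by push_cast; ring)) (hdiff _ _ (by omega) (by push_cast; ring))
        (hdiff _ _ (by omega) (by push_cast; ring)),
      quad_int hα0 hα1 hτ 0 (U (n+2)) (U (n+3)) 1 2 (by norm_num) (by norm_num)
        (hdiff _ _ (by omega) (by push_cast; ring)) (hdiff _ _ (by omega) (by push_cast; ring))
        (hdiff _ _ (by omega) (by push_cast; ring)) (hdiff _ _ (by omega) (by push_cast; ring))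
        (hdiff _ _ (by omega) (by push_cast; ring)),
      quad_int hα0 hα1 hτ (U (n+2)) (U (n+3)) (U (n+4)) 0 1 le_rfl (by norm_num)
        (hdiff _ _ (by omega) (by push_cast; ring)) (hdiff _ _ (by omega) (by push_cast; ring))
        (hdiff _ _ (by omega) (by push_cast; ring)) (hdiff _ _ (by omega) (by push_cast; ring))
        (hdiff _ _ (by omega) (by push_cast; ring)),
      quad_int hα0 hα1 hτ (U (n+2)) (U (n+3)) (U (n+4)) 0 0 le_rfl le_rfl
        (hdiff _ _ (by omega) (by push_cast; ring)) (hdiff _ _ (by omega) (by push_cast; ring))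
        (hdiff _ _ (by omega) (by push_cast; ring)) (hdiff _ _ (by omega) (by push_cast; ring))
        (hdiff _ _ (by omega) (by push_cast; ring))]
    rw [if_pos (by omega : 1 ≤ n+2), if_pos (by omega : 2 ≤ n+2),
      show n+2+1 = n+3 from by omega, show n+2+2 = n+4 from by omega]
    ring

lemma delta_one {α : ℝ} (hα0 : 0 < α) (hα1 : α < 1) {τ : ℝ} (hτ : 0 < τ) (t : ℕ → ℝ) (M : ℕ)
    (ht : ∀ j, j ≤ M → t j = τ * j) (hM : 1 ≤ M) (U : ℕ → ℝ) :
    delta α t U 1 = (1 / Real.Gamma (1-α)) * (τ^(-α) * ((U 1 - U 0) / (1-α))) := by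
  have h0 : t 0 = 0 := by rw [ht 0 (by omega)]; simp
  have h1 : t 1 = τ := by rw [ht 1 hM]; simp
  simp only [delta, show Finset.Icc 1 1 = {1} from rfl, Finset.sum_singleton]
  congr 1
  have hp : piece t U 1 1 = lin (t 0) (U 0) (t 1) (U 1) := by simp [piece]
  rw [hp, deriv_lin]
  have hfun : (fun s : ℝ => (t 1 - s) ^ (-α) * ((fun _ : ℝ => (U 1 - U 0) / (t 1 - t 0)) s))
      = fun s => (t 1 - s) ^ (-α) * ((U 1 - U 0) / (t 1 - t 0) + 0 * s) := by
    funext s; ring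
  rw [show (∫ s in (t (1-1)).. t 1, (t 1 - s) ^ (-α) * ((fun _ : ℝ => (U 1 - U 0) / (t 1 - t 0)) s))
      = ∫ s in (t 0).. t 1, (t 1 - s) ^ (-α) * ((U 1 - U 0) / (t 1 - t 0) + 0 * s) from by
        rw [hfun], int_weight_linear hα0 hα1 (by rw [h0, h1]; exact hτ.le) le_rfl]
  rw [h0, h1]
  simp only [sub_zero, sub_self, Real.zero_rpow (show (1:ℝ)-α ≠ 0 by intro h; rw [sub_eq_zero] at h; exact absurd h.symm (by linarith)), Real.zero_rpow (show (2:ℝ)-α ≠ 0 by intro h; rw [sub_eq_zero] at h; exact absurd h.symm (by linarith))]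
  have hτ1 : τ ^ ((1:ℝ)-α) = τ^(-α) * τ := by
    rw [show (1:ℝ)-α = -α + 1 by ring, Real.rpow_add_one hτ.ne']
  rw [hτ1]
  have hne : (1:ℝ) - α ≠ 0 := by intro h; rw [sub_eq_zero] at h; exact absurd h.symm (by linarith)
  field_simp
  ring

lemma contOn_rpow (α : ℝ) {A B : ℝ} (hA : 0 < A) (hB : 0 < B) :
    ContinuousOn (fun v : ℝ => v ^ (-α)) (Set.uIcc A B) := by
  apply ContinuousOn.rpow_const continuousOn_id
  intro x hx
  left
  simp only [id_eq]
  rcases Set.mem_uIcc.mp hx with ⟨h1,_⟩|⟨h1,_⟩ <;> exact ne_of_gt (by linarith)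

lemma intble_mul {α : ℝ} {g : ℝ → ℝ} (hg : Continuous g) {A B : ℝ} (hA : 0 < A) (hB : 0 < B) :
    IntervalIntegrable (fun v : ℝ => v ^ (-α) * g v) volume A B :=
  ((contOn_rpow α hA hB).mul hg.continuousOn).intervalIntegrable

lemma intble_sub_mul {α : ℝ} (K : ℝ) {g : ℝ → ℝ} (hg : Continuous g) {A B : ℝ} (hA : 0 < A) (hB : 0 < B) :
    IntervalIntegrable (fun v : ℝ => (v ^ (-α) - K) * g v) volume A B :=
  (((contOn_rpow α hA hB).sub continuousOn_const).mul hg.continuousOn).intervalIntegrable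

lemma int_linear (p q a b : ℝ) : ∫ v in a..b, (p + q*v) = p*(b-a) + q*(b^2-a^2)/2 := by
  have h1 : IntervalIntegrable (fun _ : ℝ => p) volume a b := intervalIntegrable_const
  have h2 : IntervalIntegrable (fun v : ℝ => q*v) volume a b :=
    (continuous_const.mul continuous_id).intervalIntegrable _ _
  rw [intervalIntegral.integral_add h1 h2, intervalIntegral.integral_const,
    intervalIntegral.integral_const_mul, integral_id, smul_eq_mul]
  ring

lemma int_sq (c a b : ℝ) : ∫ v in a..b, (v - c)^2 = ((b-c)^3 - (a-c)^3)/3 := by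
  rw [intervalIntegral.integral_comp_sub_right (fun x => x^2) c, integral_pow]
  norm_num

lemma int_sub (c a b : ℝ) : ∫ v in a..b, (v - c) = ((b-c)^2 - (a-c)^2)/2 := by
  rw [intervalIntegral.integral_comp_sub_right (fun x => x) c, integral_id]

lemma abs_rpow_sub {α : ℝ} (hα0 : 0 < α) {L R C v w : ℝ} (hL : 0 < L) (hC : α * L^(-α-1) ≤ C)
    (hv : v ∈ Set.Icc L R) (hw : w ∈ Set.Icc L R) : |v^(-α) - w^(-α)| ≤ C * |v - w| := by
  have hd : ∀ x ∈ Set.Icc L R, HasDerivWithinAt (fun y : ℝ => y^(-α)) (-α * x^(-α-1)) (Set.Icc L R) x := by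
    intro x hx
    exact (Real.hasDerivAt_rpow_const (Or.inl (ne_of_gt (lt_of_lt_of_le hL hx.1)))).hasDerivWithinAt
  have hb : ∀ x ∈ Set.Icc L R, ‖-α * x^(-α-1)‖ ≤ C := by
    intro x hx
    have hx0 : 0 < x := lt_of_lt_of_le hL hx.1
    rw [norm_mul, Real.norm_eq_abs, Real.norm_eq_abs, abs_of_nonneg (Real.rpow_nonneg hx0.le _),
      abs_neg, abs_of_nonneg hα0.le]
    calc α * x^(-α-1) ≤ α * L^(-α-1) :=
          mul_le_mul_of_nonneg_left (Real.rpow_le_rpow_of_nonpos hL hx.1 (by linarith)) hα0.le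
      _ ≤ C := hC
  have := (convex_Icc L R).norm_image_sub_le_of_norm_hasDerivWithin_le hd hb hw hv
  simpa [Real.norm_eq_abs] using this

lemma rpow_neg_amgm {α v : ℝ} (hα0 : 0 ≤ α) (hα1 : α ≤ 1) (hv : 0 < v) :
    v ^ (-α) ≤ α * (1/v) + (1-α) := by
  have h := Real.geom_mean_le_arith_mean2_weighted (w₁ := α) (w₂ := 1-α) (p₁ := 1/v) (p₂ := 1)
    hα0 (by linarith) (by positivity) zero_le_one (by ring)
  have h2 : (1/v)^α = v^(-α) := by
    rw [one_div, ← Real.rpow_neg_one v, ← Real.rpow_mul hv.le]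
    norm_num
  rw [← h2]
  simpa using h

section main
variable {α : ℝ} (hα0 : 0 < α) (hα1 : α < 1)

include hα0 hα1 in
lemma G_split :
    ∫ v in (1:ℝ)..(3/2), v ^ (-α) * (5 + (-4)*v)
      = ∫ v in (1:ℝ)..(3/2), (v ^ (-α) - (5/4:ℝ)^(-α)) * (5 + (-4)*v) := by
  have h1 := intble_sub_mul (α := α) ((5/4:ℝ)^(-α))
    (g := fun v => 5 + (-4)*v) (by continuity) (by norm_num : (0:ℝ) < 1) (by norm_num : (0:ℝ) < 3/2)
  have h2 : IntervalIntegrable (fun v : ℝ => (5/4:ℝ)^(-α) * (5 + (-4)*v)) volume 1 (3/2) :=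
    (continuous_const.mul (by continuity)).intervalIntegrable _ _
  have hsplit : (fun v : ℝ => v^(-α) * (5 + (-4)*v))
      = fun v => (v^(-α) - (5/4:ℝ)^(-α))*(5 + (-4)*v) + (5/4:ℝ)^(-α)*(5 + (-4)*v) :=
    funext fun v => by ring
  rw [hsplit, intervalIntegral.integral_add h1 h2, intervalIntegral.integral_const_mul, int_linear]
  norm_num

include hα0 hα1 in
lemma G_nonneg : 0 ≤ ∫ v in (1:ℝ)..(3/2), v ^ (-α) * (5 + (-4)*v) := by
  rw [G_split hα0 hα1]
  apply intervalIntegral.integral_nonneg (by norm_num)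
  intro v hv
  rcases le_total v (5/4) with h|h
  · apply mul_nonneg
    · exact sub_nonneg.2 (Real.rpow_le_rpow_of_nonpos (by linarith [hv.1]) h (by linarith))
    · linarith
  · rw [show (v ^ (-α) - (5/4:ℝ)^(-α)) * (5 + (-4)*v)
        = (-(v ^ (-α) - (5/4:ℝ)^(-α))) * (-(5 + (-4)*v)) by ring]
    apply mul_nonneg
    · exact neg_nonneg.2 (sub_nonpos.2 (Real.rpow_le_rpow_of_nonpos (by norm_num) h (by linarith)))
    · linarith

include hα0 hα1 in
lemma G_le : ∫ v in (1:ℝ)..(3/2), v ^ (-α) * (5 + (-4)*v) ≤ α/24 := by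
  rw [G_split hα0 hα1]
  have hmono : ∫ v in (1:ℝ)..(3/2), (v ^ (-α) - (5/4:ℝ)^(-α)) * (5 + (-4)*v)
      ≤ ∫ v in (1:ℝ)..(3/2), 4*α*(v - 5/4)^2 := by
    apply intervalIntegral.integral_mono_on (by norm_num)
      (intble_sub_mul _ (by continuity) (by norm_num) (by norm_num))
      ((by continuity : Continuous fun v : ℝ => 4*α*(v - 5/4)^2).intervalIntegrable _ _)
    intro v hv
    have habs : |v^(-α) - (5/4:ℝ)^(-α)| ≤ α * |v - 5/4| :=
      abs_rpow_sub hα0 (by norm_num : (0:ℝ) < 1)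
        (by rw [Real.one_rpow]; linarith : α * (1:ℝ)^(-α-1) ≤ α) hv
        (by constructor <;> norm_num)
    calc (v ^ (-α) - (5/4:ℝ)^(-α)) * (5 + (-4)*v)
        ≤ |(v ^ (-α) - (5/4:ℝ)^(-α)) * (5 + (-4)*v)| := le_abs_self _
      _ = |v ^ (-α) - (5/4:ℝ)^(-α)| * (4 * |v - 5/4|) := by
          rw [abs_mul, show (5 + (-4)*v) = (-4)*(v - 5/4) by ring, abs_mul]
          rw [abs_of_nonpos (by norm_num : (-4:ℝ) ≤ 0)]
          ring
      _ ≤ (α * |v - 5/4|) * (4 * |v - 5/4|) :=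
          mul_le_mul_of_nonneg_right habs (by positivity)
      _ = 4*α*(v - 5/4)^2 := by
          rw [show (α * |v - 5/4|) * (4 * |v - 5/4|) = 4*α*(|v - 5/4| * |v - 5/4|) by ring,
            ← abs_mul, abs_of_nonneg (mul_self_nonneg _)]
          ring
  calc _ ≤ ∫ v in (1:ℝ)..(3/2), 4*α*(v - 5/4)^2 := hmono
    _ = α/24 := by
        rw [show (fun v : ℝ => 4*α*(v-5/4)^2) = fun v => (4*α)*(v-5/4)^2 from funext fun v => by ring]
        rw [intervalIntegral.integral_const_mul, int_sq]
        norm_num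
        ring

include hα0 hα1 in
lemma C2_le : ∫ v in (1:ℝ)..(3/2), v ^ (-α) * (v - 1) ≤ 1/8 - α/36 := by
  have hmono : ∫ v in (1:ℝ)..(3/2), v ^ (-α) * (v - 1)
      ≤ ∫ v in (1:ℝ)..(3/2), ((v - 1) - (2*α/3)*(v-1)^2) := by
    apply intervalIntegral.integral_mono_on (by norm_num)
      (intble_mul (by continuity) (by norm_num) (by norm_num))
      ((by continuity : Continuous fun v : ℝ => (v - 1) - (2*α/3)*(v-1)^2).intervalIntegrable _ _)
    intro v hv
    obtain ⟨hv1, hv2⟩ := hv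
    have hv0 : (0:ℝ) < v := by linarith
    have hXv := rpow_neg_amgm hα0.le hα1.le hv0
    have hinv : 1/v ≤ 1 - (2/3)*(v-1) := by
      rw [div_le_iff₀ hv0]; nlinarith
    have hX2 : v^(-α) ≤ 1 - (2*α/3)*(v-1) := by
      nlinarith [mul_le_mul_of_nonneg_left hinv hα0.le]
    nlinarith [mul_le_mul_of_nonneg_right hX2 (by linarith : (0:ℝ) ≤ v - 1)]
  calc _ ≤ ∫ v in (1:ℝ)..(3/2), ((v - 1) - (2*α/3)*(v-1)^2) := hmono
    _ = 1/8 - α/36 := by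
        rw [intervalIntegral.integral_sub
          ((by continuity : Continuous fun v : ℝ => v - 1).intervalIntegrable _ _)
          ((by continuity : Continuous fun v : ℝ => (2*α/3)*(v-1)^2).intervalIntegrable _ _),
          int_sub, intervalIntegral.integral_const_mul, int_sq]
        norm_num
        ring

include hα0 hα1 in
lemma C3_le : ∫ v in (3/2:ℝ)..2, v ^ (-α) * (7 + (-4)*v) ≤ α/36 := by
  have h1 := intble_sub_mul (α := α) ((7/4:ℝ)^(-α))
    (g := fun v => 7 + (-4)*v) (by continuity) (by norm_num : (0:ℝ) < 3/2) (by norm_num : (0:ℝ) < 2)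
  have h2 : IntervalIntegrable (fun v : ℝ => (7/4:ℝ)^(-α) * (7 + (-4)*v)) volume (3/2) 2 :=
    (continuous_const.mul (by continuity)).intervalIntegrable _ _
  have hsplit : (fun v : ℝ => v^(-α) * (7 + (-4)*v))
      = fun v => (v^(-α) - (7/4:ℝ)^(-α))*(7 + (-4)*v) + (7/4:ℝ)^(-α)*(7 + (-4)*v) :=
    funext fun v => by ring
  rw [hsplit, intervalIntegral.integral_add h1 h2, intervalIntegral.integral_const_mul, int_linear]
  have hz : (7:ℝ)*(2 - 3/2) + (-4)*((2:ℝ)^2 - (3/2)^2)/2 = 0 := by norm_num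
  rw [hz, mul_zero, add_zero]
  have hmono : ∫ v in (3/2:ℝ)..2, (v ^ (-α) - (7/4:ℝ)^(-α)) * (7 + (-4)*v)
      ≤ ∫ v in (3/2:ℝ)..2, (8*α/3)*(v - 7/4)^2 := by
    apply intervalIntegral.integral_mono_on (by norm_num)
      (intble_sub_mul _ (by continuity) (by norm_num) (by norm_num))
      ((by continuity : Continuous fun v : ℝ => (8*α/3)*(v - 7/4)^2).intervalIntegrable _ _)
    intro v hv
    have hC : α * (3/2:ℝ)^(-α-1) ≤ 2*α/3 := by
      have h32 : (3/2:ℝ)^(-α-1) ≤ (3/2:ℝ)^(-1:ℝ) :=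
        Real.rpow_le_rpow_of_exponent_le (by norm_num) (by linarith)
      rw [Real.rpow_neg_one] at h32
      nlinarith
    have habs : |v^(-α) - (7/4:ℝ)^(-α)| ≤ (2*α/3) * |v - 7/4| :=
      abs_rpow_sub hα0 (by norm_num : (0:ℝ) < 3/2) hC hv (by constructor <;> norm_num)
    calc (v ^ (-α) - (7/4:ℝ)^(-α)) * (7 + (-4)*v)
        ≤ |(v ^ (-α) - (7/4:ℝ)^(-α)) * (7 + (-4)*v)| := le_abs_self _
      _ = |v ^ (-α) - (7/4:ℝ)^(-α)| * (4 * |v - 7/4|) := by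
          rw [abs_mul, show (7 + (-4)*v) = (-4)*(v - 7/4) by ring, abs_mul]
          rw [abs_of_nonpos (by norm_num : (-4:ℝ) ≤ 0)]
          ring
      _ ≤ ((2*α/3) * |v - 7/4|) * (4 * |v - 7/4|) :=
          mul_le_mul_of_nonneg_right habs (by positivity)
      _ = (8*α/3)*(v - 7/4)^2 := by
          rw [show ((2*α/3) * |v - 7/4|) * (4 * |v - 7/4|) = (8*α/3)*(|v - 7/4| * |v - 7/4|) by ring,
            ← abs_mul, abs_of_nonneg (mul_self_nonneg _)]
          ring
  calc _ ≤ ∫ v in (3/2:ℝ)..2, (8*α/3)*(v - 7/4)^2 := hmono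
    _ = α/36 := by
        rw [intervalIntegral.integral_const_mul, int_sq]
        norm_num
        ring


end main
end helperLemmas

lemma coef_simplify {α τ : ℝ} (X : ℝ) (hτ : 0 < τ) (hΓ : Real.Gamma (1-α) ≠ 0) :
    τ ^ α * Real.Gamma (1-α) * 2^α * ((1/Real.Gamma (1-α)) * (τ^(-α) * X)) = 2^α * X := by
  have hττ : τ ^ α * τ ^ (-α) = 1 := by
    rw [← Real.rpow_add hτ]; simp
  field_simp
  linear_combination X * hττ

set_option maxHeartbeats 3000000 in
/-- uniform temporal mesh, bounds on `A_m, B_m, F_m`. -/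
theorem statement3 (α T : ℝ) (hα : α ∈ Set.Ioo (0:ℝ) 1) (hT : 0 < T)
    (M : ℕ) (hM : 1 ≤ M) (t : ℕ → ℝ)
    (ht : ∀ j, j ≤ M → t j = T * j / M) :
    (Bm α t 1 = Am α t 1 ∧ 0 < Bm α t 1) ∧
    ∀ m, 2 ≤ m → m ≤ M →
      Bm α t m = Bc α ∧
      (0 ≤ Ac α - Am α t m ∧ Ac α - Am α t m ≤ α / 24) ∧
      nuc α * Ac α ≤ Am α t m ∧
      Fm α t m ≤ 1 + (Ac α - Am α t m) := by
  obtain ⟨hα0, hα1⟩ := hα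
  have hMpos : (0:ℝ) < M := by exact_mod_cast hM
  have hτ : 0 < T / M := div_pos hT hMpos
  set τ := T / M with hτdef
  have ht' : ∀ j, j ≤ M → t j = τ * j := fun j hj => by rw [ht j hj, hτdef]; ring
  have h1α : (0:ℝ) < 1 - α := by linarith
  have h2α : (0:ℝ) < 2 - α := by linarith
  have hΓ : 0 < Real.Gamma (1-α) := Real.Gamma_pos_of_pos h1α
  -- rpow facts
  set a := (2:ℝ)^(1-α) with hadef
  set b := (3:ℝ)^(1-α) with hbdef
  have ha : 0 < a := Real.rpow_pos_of_pos two_pos _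
  have hb : 0 < b := Real.rpow_pos_of_pos (by norm_num) _
  have h2a : (2:ℝ)^(2-α) = 2*a := by
    rw [show (2:ℝ)-α = 1+(1-α) by ring, Real.rpow_add two_pos, Real.rpow_one, hadef]
  have h3b : (3:ℝ)^(2-α) = 3*b := by
    rw [show (2:ℝ)-α = 1+(1-α) by ring, Real.rpow_add (by norm_num), Real.rpow_one, hbdef]
  have h4f : (4:ℝ)^(1-α) = a*a := by
    rw [show (4:ℝ) = 2*2 by norm_num, Real.mul_rpow (by norm_num) (by norm_num), hadef]
  have h4f2 : (4:ℝ)^(2-α) = 4*(a*a) := by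
    rw [show (2:ℝ)-α = 1+(1-α) by ring, Real.rpow_add (by norm_num : (0:ℝ) < 4), Real.rpow_one, h4f]
  have h2pow : (2:ℝ)^α = 2/a := by
    rw [eq_div_iff ha.ne', hadef, ← Real.rpow_add two_pos]
    norm_num
  have h32a : (3/2:ℝ)^(1-α) = b/a := by
    rw [Real.div_rpow (by norm_num) (by norm_num), hadef, hbdef]
  have h32b : (3/2:ℝ)^(2-α) = 3*b/(2*a) := by
    rw [Real.div_rpow (by norm_num) (by norm_num), h2a, h3b]
  have hz1 : (0:ℝ)^((1:ℝ)-α) = 0 := Real.zero_rpow h1α.ne'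
  have hz2 : (0:ℝ)^((2:ℝ)-α) = 0 := Real.zero_rpow h2α.ne'
  -- the v-space integrals
  have hGv : ∫ v in (1:ℝ)..(3/2), v^(-α) * (5 + (-4)*v) = 5*(b/a - 1)/(1-α) - 4*(3*b/(2*a) - 1)/(2-α) := by
    rw [int_rpow_linear hα0 hα1 (by norm_num) (by norm_num) 5 (-4), h32a, h32b, Real.one_rpow, Real.one_rpow]
    ring
  have hC2v : ∫ v in (1:ℝ)..(3/2), v^(-α) * (v - 1) = (-1)*(b/a - 1)/(1-α) + (3*b/(2*a) - 1)/(2-α) := by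
    rw [show (fun v : ℝ => v ^ (-α) * (v - 1)) = (fun v => v ^ (-α) * (-1 + 1*v)) from
      funext fun v => by ring]
    rw [int_rpow_linear hα0 hα1 (by norm_num) (by norm_num) (-1) 1, h32a, h32b, Real.one_rpow, Real.one_rpow]
    ring
  have hC3v : ∫ v in (3/2:ℝ)..2, v^(-α) * (7 + (-4)*v)
      = 7*(a - b/a)/(1-α) - 4*(2*a - 3*b/(2*a))/(2-α) := by
    rw [int_rpow_linear hα0 hα1 (by norm_num) (by norm_num) 7 (-4), h32a, h32b, h2a, hadef]
    ring
  constructor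
  · -- m = 1
    have htaut1 : taut t 1 = τ := by
      simp only [taut, tau, if_pos rfl]
      rw [ht' 1 hM, ht' 0 (by omega)]
      norm_num
    have hB1 : Bm α t 1 = 2^α * ((1 - 0)/(1-α)) := by
      rw [Bm, htaut1, delta_one hα0 hα1 hτ t M ht' hM, coef_simplify _ hτ hΓ.ne']
      norm_num [hatf]
    have hA1 : Am α t 1 = 2^α * ((1 - 0)/(1-α)) := by
      rw [Am, show (1:ℕ)-1 = 0 from rfl, htaut1, delta_one hα0 hα1 hτ t M ht' hM, coef_simplify _ hτ hΓ.ne']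
      norm_num [hatf]
      ring
    refine ⟨hB1.trans hA1.symm, ?_⟩
    rw [hB1]
    have : (0:ℝ) < 2^α := Real.rpow_pos_of_pos two_pos _
    positivity
  · intro m hm2 hmM
    obtain ⟨k, rfl⟩ : ∃ k, m = k + 2 := ⟨m - 2, by omega⟩
    have htaut : taut t (k+2) = τ := by
      simp only [taut, tau, if_neg (by omega : ¬(k+2=1)),
        show k+2-1 = k+1 from rfl, show k+1-1 = k from rfl]
      rw [ht' (k+2) hmM, ht' (k+1) (by omega), ht' k (by omega)]
      push_cast; ring
    -- B_m
    have hBm : Bm α t (k+2) = Bc α := by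
      rw [Bm, htaut, delta_uniform hα0 hα1 hτ t M ht' k hmM (hatf (k+2))
          (fun i hi => if_neg (by omega)),
        show hatf (k+2) k = 0 from if_neg (by omega),
        show hatf (k+2) (k+1) = 0 from if_neg (by omega),
        show hatf (k+2) (k+2) = 1 from if_pos rfl,
        coef_simplify _ hτ hΓ.ne']
      have hJ1 : Jt α 0 0 0 1 2 = 0 := by simp [Jt]
      have hJ2 : Jt α 0 0 0 2 3 = 0 := by simp [Jt]
      rw [hJ1, hJ2, ite_self, ite_self]
      simp only [Jt]
      norm_num [hz1, hz2]
      rw [h2a, h2pow, Bc]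
      field_simp
      ring
    refine ⟨hBm, ?_⟩
    -- A_m
    have hAm : Am α t (k+2) = Ac α - (if 1 ≤ k then 2^α * Jt α 0 0 1 1 2 else 0) := by
      rw [Am, show k+2-1 = k+1 from rfl, htaut, delta_uniform hα0 hα1 hτ t M ht' k hmM (hatf (k+1))
          (fun i hi => if_neg (by omega)),
        show hatf (k+1) k = 0 from if_neg (by omega),
        show hatf (k+1) (k+1) = 1 from if_pos rfl,
        show hatf (k+1) (k+2) = 0 from if_neg (by omega),
        coef_simplify _ hτ hΓ.ne']
      have hJ2 : Jt α 0 0 0 2 3 = 0 := by simp [Jt]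
      rw [hJ2, ite_self]
      have hmain : 2^α * (Jt α 0 1 0 0 1 + Jt α 0 1 0 0 0) = -Ac α := by
        simp only [Jt]
        norm_num [hz1, hz2]
        rw [h2a, h2pow, Ac]
        field_simp
        ring
      rcases le_or_gt 1 k with hk1 | hk1
      · rw [if_pos hk1, if_pos hk1]
        rw [show Jt α 0 1 0 0 1 + Jt α 0 1 0 0 0 + Jt α 0 0 1 1 2 + 0
            = (Jt α 0 1 0 0 1 + Jt α 0 1 0 0 0) + Jt α 0 0 1 1 2 by ring, mul_add, hmain]
        ring
      · rw [if_neg (by omega), if_neg (by omega)]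
        rw [show Jt α 0 1 0 0 1 + Jt α 0 1 0 0 0 + 0 + 0
            = Jt α 0 1 0 0 1 + Jt α 0 1 0 0 0 by ring, hmain]
        ring
    -- the key identification: 2^α * Jt α 0 0 1 1 2 = G integral
    have hgG : 2^α * Jt α 0 0 1 1 2 = ∫ v in (1:ℝ)..(3/2), v^(-α) * (5 + (-4)*v) := by
      rw [hGv]
      simp only [Jt]
      norm_num [hz1, hz2]
      rw [h2a, h3b, h2pow]
      field_simp
      ring
    have hAmG : Ac α - Am α t (k+2) = (if 1 ≤ k then ∫ v in (1:ℝ)..(3/2), v^(-α) * (5 + (-4)*v) else 0) := by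
      rw [hAm]
      rcases le_or_gt 1 k with hk1 | hk1
      · rw [if_pos hk1, if_pos hk1, hgG]; ring
      · rw [if_neg (by omega), if_neg (by omega)]; ring
    have hbd1 : 0 ≤ Ac α - Am α t (k+2) := by
      rw [hAmG]
      rcases le_or_gt 1 k with hk1 | hk1
      · rw [if_pos hk1]; exact G_nonneg hα0 hα1
      · rw [if_neg (by omega)]
    have hbd2 : Ac α - Am α t (k+2) ≤ α/24 := by
      rw [hAmG]
      rcases le_or_gt 1 k with hk1 | hk1
      · rw [if_pos hk1]; exact G_le hα0 hα1
      · rw [if_neg (by omega)]; positivity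
    refine ⟨⟨hbd1, hbd2⟩, ?_, ?_⟩
    · -- nuc * Ac ≤ Am
      have hAcpos : 0 < Ac α := by
        rw [Ac]; positivity
      have key : Ac α - nuc α * Ac α = α/(12*(2-α)) := by
        rw [Ac, nuc]; field_simp; ring
      have h24 : α/24 ≤ α/(12*(2-α)) := by
        rw [div_le_div_iff₀ (by norm_num) (by nlinarith)]
        nlinarith
      nlinarith [hbd2]
    · -- F_m
      have hFm : Fm α t (k+2) = (if 1 ≤ k then 2^α * Jt α 0 1 1 1 2 else 0)
          + (if 2 ≤ k then 2^α * Jt α 0 0 1 2 3 else 0) := by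
        rw [Fm, htaut, show k+2-2 = k from rfl, show k+2-1 = k+1 from rfl,
          delta_uniform hα0 hα1 hτ t M ht' k hmM _
            (fun i hi => by
              show hatf k i + hatf (k+1) i + hatf (k+2) i = 0
              rw [show hatf k i = 0 from if_neg (by omega),
                show hatf (k+1) i = 0 from if_neg (by omega),
                show hatf (k+2) i = 0 from if_neg (by omega)]
              ring),
          coef_simplify _ hτ hΓ.ne']
        rw [show hatf k k + hatf (k+1) k + hatf (k+2) k = 1 by
            rw [show hatf k k = 1 from if_pos rfl, show hatf (k+1) k = 0 from if_neg (by omega),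
              show hatf (k+2) k = 0 from if_neg (by omega)]; ring,
          show hatf k (k+1) + hatf (k+1) (k+1) + hatf (k+2) (k+1) = 1 by
            rw [show hatf k (k+1) = 0 from if_neg (by omega), show hatf (k+1) (k+1) = 1 from if_pos rfl,
              show hatf (k+2) (k+1) = 0 from if_neg (by omega)]; ring,
          show hatf k (k+2) + hatf (k+1) (k+2) + hatf (k+2) (k+2) = 1 by
            rw [show hatf k (k+2) = 0 from if_neg (by omega), show hatf (k+1) (k+2) = 0 from if_neg (by omega),
              show hatf (k+2) (k+2) = 1 from if_pos rfl]; ring]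
        have hJ1 : Jt α 1 1 1 0 1 = 0 := by simp only [Jt]; norm_num
        have hJ2 : Jt α 1 1 1 0 0 = 0 := by simp only [Jt]; norm_num
        rw [hJ1, hJ2]
        rcases le_or_gt 1 k with hk1 | hk1
        · rcases le_or_gt 2 k with hk2 | hk2
          · rw [if_pos hk1, if_pos hk2, if_pos hk1, if_pos hk2]; ring
          · rw [if_pos hk1, if_neg (by omega), if_pos hk1, if_neg (by omega)]; ring
        · rw [if_neg (by omega), if_neg (by omega), if_neg (by omega), if_neg (by omega)]; ring
      have hC2id : 2^α * Jt α 0 1 1 1 2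
          = 8 * (∫ v in (1:ℝ)..(3/2), v^(-α) * (v - 1)) + 2^α * Jt α 0 0 1 1 2 := by
        rw [hC2v]
        simp only [Jt]
        norm_num [hz1, hz2]
        rw [h2a, h3b, h2pow]
        field_simp
        ring
      have hC3id : 2^α * Jt α 0 0 1 2 3 = ∫ v in (3/2:ℝ)..2, v^(-α) * (7 + (-4)*v) := by
        rw [hC3v]
        simp only [Jt]
        norm_num [hz1, hz2]
        rw [h3b, h4f, h4f2, h2pow]
        field_simp
        ring
      rw [hFm, hAmG]
      have h8 : 8 * (∫ v in (1:ℝ)..(3/2), v^(-α) * (v - 1)) ≤ 1 - 2*α/9 := by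
        nlinarith [C2_le hα0 hα1]
      rcases le_or_gt 1 k with hk1 | hk1
      · rcases le_or_gt 2 k with hk2 | hk2
        · rw [if_pos hk1, if_pos hk2, if_pos hk1, hC2id, hC3id, hgG]
          nlinarith [C3_le hα0 hα1, hα0]
        · rw [if_pos hk1, if_neg (by omega), if_pos hk1, hC2id, hgG]
          nlinarith [hα0]
      · rw [if_neg (by omega), if_neg (by omega), if_neg (by omega)]
        norm_num
end
end

section
/- Let M ≥ 1, let β_0 := 0 and β_j ∈ [0,1) for 1 ≤ j ≤ M, and let real coefficients κ_{m,j} (0 ≤ j ≤ m ≤ M) satisfy property (★). For real numbers U^0, …, U^M define V^0 := U^0, V^j := (U^j − β_j U^{j−1})/(1 − β_j) for 1 ≤ j ≤ M, and F^m := Σ_{j=0}^m κ_{m,j} V^j for 1 ≤ m ≤ M. If U^0 ≥ 0 and F^m ≥ 0 for all 1 ≤ m ≤ M, then U^j ≥ 0 for all 0 ≤ j ≤ M. -/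
noncomputable section
open Real MeasureTheory Finset

open L2scheme
/-- discrete inverse-monotonicity from property (★). -/
theorem statement10 (M : ℕ) (hM : 1 ≤ M) (β : ℕ → ℝ) (hβ0 : β 0 = 0)
    (hβ : ∀ j, 1 ≤ j → j ≤ M → 0 ≤ β j ∧ β j < 1)
    (κ : ℕ → ℕ → ℝ) (hκ : Star M κ) (U : ℕ → ℝ)
    (hU0 : 0 ≤ U 0)
    (hF : ∀ m, 1 ≤ m → m ≤ M →
      0 ≤ ∑ j ∈ Finset.range (m + 1), κ m j * Vv β U j) :
    ∀ j, j ≤ M → 0 ≤ U j := by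
  suffices h : ∀ m, m ≤ M → 0 ≤ Vv β U m ∧ 0 ≤ U m from fun j hj => (h j hj).2
  intro m
  induction m using Nat.strong_induction_on with
  | _ m ih =>
    intro hm
    match m, ih, hm with
    | 0, _, _ => simpa [Vv] using hU0
    | (n+1), ih, hm =>
      have hm1 : 1 ≤ n + 1 := Nat.succ_le_succ (Nat.zero_le n)
      have hV : ∀ j, j < n + 1 → 0 ≤ Vv β U j :=
        fun j hj => (ih j hj (le_trans hj.le hm)).1
      have hFm := hF (n+1) hm1 hm
      rw [Finset.sum_range_succ] at hFm
      have hneg : ∑ j ∈ Finset.range (n+1), κ (n+1) j * Vv β U j ≤ 0 :=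
        Finset.sum_nonpos fun j hj => mul_nonpos_of_nonpos_of_nonneg
          ((hκ.2) (n+1) j (Finset.mem_range.mp hj) hm) (hV j (Finset.mem_range.mp hj))
      have hκmm := ((hκ.1) (n+1) hm1 hm).1
      have hprod : 0 ≤ κ (n+1) (n+1) * Vv β U (n+1) := by linarith
      have hVm : 0 ≤ Vv β U (n+1) := nonneg_of_mul_nonneg_right hprod hκmm
      refine ⟨hVm, ?_⟩
      have hβm := hβ (n+1) hm1 hm
      have hbpos : 0 < 1 - β (n+1) := by linarith [hβm.2]
      have hUm : U (n+1) = (1 - β (n+1)) * Vv β U (n+1) + β (n+1) * U n := by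
        simp only [Vv, Nat.succ_ne_zero, if_false, Nat.add_sub_cancel]
        field_simp
        ring
      have hU' : 0 ≤ U n := (ih n (Nat.lt_succ_self n) (by omega)).2
      rw [hUm]
      have := mul_nonneg hbpos.le hVm
      have := mul_nonneg hβm.1 hU'
      linarith
end
end

section
/- Let α ∈ (0,1), let 0 < t_1 < ⋯ < t_M, let β_0 := 0 and β_j ∈ [0,1) for 1 ≤ j ≤ M, and let real coefficients κ_{m,j} (0 ≤ j ≤ m ≤ M) satisfy property (★) together with κ_{1,1} ≥ c₀ t_1^{−α}, κ_{2,2} ≥ c₀ t_2^{−α} (when M ≥ 2), and −κ_{m,0} ≥ c₀ t_m^{−α} for all 3 ≤ m ≤ M, for some constant c₀ > 0. For real numbers U^0, …, U^M define V^0 := U^0, V^j := (U^j − β_j U^{j−1})/(1 − β_j) for 1 ≤ j ≤ M, and F^m := Σ_{j=0}^m κ_{m,j} V^j for 1 ≤ m ≤ M. If U^0 = 0, then |U^m| ≤ C max_{1 ≤ j ≤ m} { t_j^α |F^j| } for all 1 ≤ m ≤ M, where the constant C depends only on c₀. -/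
noncomputable section
open Real MeasureTheory Finset

open L2scheme
set_option maxHeartbeats 1000000 in
/-- stability bound `|U^m| ≲ max_j t_j^α |F^j|` from property (★)
and lower bounds on the coefficients, with a constant depending only on `c₀`. -/
theorem statement11 (c0 : ℝ) (hc0 : 0 < c0) :
    ∃ C : ℝ, 0 < C ∧
      ∀ (α : ℝ), α ∈ Set.Ioo (0:ℝ) 1 →
      ∀ (M : ℕ) (t β : ℕ → ℝ) (κ : ℕ → ℕ → ℝ), 1 ≤ M →
        0 < t 1 → (∀ j, 1 ≤ j → j < M → t j < t (j + 1)) →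
        β 0 = 0 → (∀ j, 1 ≤ j → j ≤ M → 0 ≤ β j ∧ β j < 1) →
        Star M κ →
        c0 * t 1 ^ (-α) ≤ κ 1 1 →
        (2 ≤ M → c0 * t 2 ^ (-α) ≤ κ 2 2) →
        (∀ m, 3 ≤ m → m ≤ M → c0 * t m ^ (-α) ≤ -κ m 0) →
        ∀ U : ℕ → ℝ, U 0 = 0 →
        ∀ m, ∀ hm : 1 ≤ m, m ≤ M →
          |U m| ≤ C * (Finset.Icc 1 m).sup' (Finset.nonempty_Icc.mpr hm)
            (fun j => t j ^ α * |∑ i ∈ Finset.range (j + 1), κ j i * Vv β U i|) := by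

  refine ⟨2 / c0, by positivity, ?_⟩
  rintro α ⟨hα0, hα1⟩ M t β κ hM ht1 htmono hβ0 hβ hstar hκ11 hκ22 hκm0 U hU0 m hm hmM
  have tpos : ∀ k, 1 ≤ k → k ≤ M → 0 < t k := by
    intro k
    induction k with
    | zero => omega
    | succ n ih =>
      intro _ hkM
      rcases Nat.eq_zero_or_pos n with h | h
      · subst h; exact ht1
      · exact (ih h (by omega)).trans (htmono n h (by omega))
  set G := (Finset.Icc 1 m).sup' (Finset.nonempty_Icc.mpr hm)
      (fun j => t j ^ α * |∑ i ∈ Finset.range (j + 1), κ j i * Vv β U i|) with hGdef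
  have hG : ∀ k, 1 ≤ k → k ≤ m →
      t k ^ α * |∑ i ∈ Finset.range (k + 1), κ k i * Vv β U i| ≤ G := by
    intro k hk1 hkm
    exact Finset.le_sup' (fun j => t j ^ α * |∑ i ∈ Finset.range (j + 1), κ j i * Vv β U i|) (Finset.mem_Icc.mpr ⟨hk1, hkm⟩)
  have hGnn : 0 ≤ G := le_trans (by positivity) (hG 1 le_rfl hm)
  have hV0 : Vv β U 0 = 0 := by simp [Vv, hU0]
  have hFle : ∀ k, 1 ≤ k → k ≤ m →
      |∑ i ∈ Finset.range (k + 1), κ k i * Vv β U i| ≤ G * (t k ^ α)⁻¹ := by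
    intro k hk1 hkm
    have htk : (0:ℝ) < t k ^ α := Real.rpow_pos_of_pos (tpos k hk1 (hkm.trans hmM)) α
    rw [← div_eq_mul_inv, le_div_iff₀ htk, mul_comm]
    exact hG k hk1 hkm
  have hrpinv : ∀ k, 1 ≤ k → k ≤ M → t k ^ (-α) = (t k ^ α)⁻¹ := by
    intro k hk1 hkM
    exact Real.rpow_neg (tpos k hk1 hkM).le α
  have key : ∀ k, k ≤ m → |Vv β U k| ≤ 2 * G / c0 ∧ (k ≤ 1 → |Vv β U k| ≤ G / c0) := by
    intro k
    induction k using Nat.strong_induction_on with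
    | _ k ih =>
      intro hkm
      rcases Nat.eq_zero_or_pos k with hk0 | hk1
      · subst hk0
        rw [hV0, abs_zero]
        exact ⟨by positivity, fun _ => by positivity⟩
      have hkM : k ≤ M := hkm.trans hmM
      have hκpos : 0 < κ k k := (hstar.1 k hk1 hkM).1
      have hsum0 : ∑ i ∈ Finset.range (k + 1), κ k i = 0 := (hstar.1 k hk1 hkM).2
      have hκle : ∀ i, i < k → κ k i ≤ 0 := fun i hi => hstar.2 k i hi hkM
      have hFk := hFle k hk1 hkm
      rcases Nat.lt_or_ge k 2 with hk2 | hk2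
      · -- k = 1
        have hk1' : k = 1 := by omega
        subst hk1'
        have hs : ∑ i ∈ Finset.range 2, κ 1 i * Vv β U i = κ 1 1 * Vv β U 1 := by
          simp [Finset.sum_range_succ, hV0]
        rw [hs, abs_mul, abs_of_pos hκpos] at hFk
        have hx : t 1 ^ (-α) = (t 1 ^ α)⁻¹ := hrpinv 1 le_rfl (hm.trans hmM)
        have hxpos : (0:ℝ) < (t 1 ^ α)⁻¹ := by
          have := Real.rpow_pos_of_pos ht1 α; positivity
        have hκ11' : c0 * (t 1 ^ α)⁻¹ ≤ κ 1 1 := by rw [← hx]; exact hκ11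
        have h3 : G * (t 1 ^ α)⁻¹ ≤ G / c0 * κ 1 1 := by
          have he : G / c0 * (c0 * (t 1 ^ α)⁻¹) = G * (t 1 ^ α)⁻¹ := by field_simp
          have := mul_le_mul_of_nonneg_left hκ11' (by positivity : (0:ℝ) ≤ G / c0)
          linarith
        have h4 : κ 1 1 * |Vv β U 1| ≤ κ 1 1 * (G / c0) := by linarith
        have hmain : |Vv β U 1| ≤ G / c0 := le_of_mul_le_mul_left h4 hκpos
        have hGc : 0 ≤ G / c0 := by positivity
        refine ⟨hmain.trans ?_, fun _ => hmain⟩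
        rw [show (2:ℝ) * G / c0 = G / c0 + G / c0 by ring]
        linarith
      rcases Nat.lt_or_ge k 3 with hk3 | hk3
      · -- k = 2
        have hk2' : k = 2 := by omega
        subst hk2'
        have hs : ∑ i ∈ Finset.range 3, κ 2 i * Vv β U i
            = κ 2 1 * Vv β U 1 + κ 2 2 * Vv β U 2 := by
          simp [Finset.sum_range_succ, hV0]
        have hsum0' : κ 2 0 + κ 2 1 + κ 2 2 = 0 := by
          have := hsum0
          simp [Finset.sum_range_succ] at this
          linarith
        have hV1 := (ih 1 (by omega) (by omega)).2 le_rfl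
        have hκ21 : κ 2 1 ≤ 0 := hκle 1 (by omega)
        have hκ20 : κ 2 0 ≤ 0 := hκle 0 (by omega)
        have hx : t 2 ^ (-α) = (t 2 ^ α)⁻¹ := hrpinv 2 (by omega) hkM
        have hxpos : (0:ℝ) < (t 2 ^ α)⁻¹ := by
          have := Real.rpow_pos_of_pos (tpos 2 (by omega) hkM) α; positivity
        have hκ22' : c0 * (t 2 ^ α)⁻¹ ≤ κ 2 2 := by rw [← hx]; exact hκ22 hkM
        have habs : κ 2 2 * |Vv β U 2| ≤
            |∑ i ∈ Finset.range 3, κ 2 i * Vv β U i| + (-(κ 2 1)) * |Vv β U 1| := by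
          have h1 : κ 2 2 * |Vv β U 2| = |κ 2 2 * Vv β U 2| := by
            rw [abs_mul, abs_of_pos hκpos]
          have h2 : κ 2 2 * Vv β U 2
              = (∑ i ∈ Finset.range 3, κ 2 i * Vv β U i) - κ 2 1 * Vv β U 1 := by
            rw [hs]; ring
          rw [h1, h2]
          refine (abs_sub _ _).trans ?_
          rw [abs_mul, abs_of_nonpos hκ21]
        have hF2 : |∑ i ∈ Finset.range 3, κ 2 i * Vv β U i| ≤ G / c0 * κ 2 2 := by
          have he : G / c0 * (c0 * (t 2 ^ α)⁻¹) = G * (t 2 ^ α)⁻¹ := by field_simp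
          have := mul_le_mul_of_nonneg_left hκ22' (by positivity : (0:ℝ) ≤ G / c0)
          linarith
        have hb1 : (-(κ 2 1)) * |Vv β U 1| ≤ κ 2 2 * (G / c0) := by
          have h5 : -κ 2 1 ≤ κ 2 2 := by linarith
          exact mul_le_mul h5 hV1 (abs_nonneg _) hκpos.le
        have h4 : κ 2 2 * |Vv β U 2| ≤ κ 2 2 * (2 * G / c0) := by
          calc κ 2 2 * |Vv β U 2|
              ≤ |∑ i ∈ Finset.range 3, κ 2 i * Vv β U i| + (-(κ 2 1)) * |Vv β U 1| := habs
            _ ≤ G / c0 * κ 2 2 + κ 2 2 * (G / c0) := add_le_add hF2 hb1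
            _ = κ 2 2 * (2 * G / c0) := by ring
        exact ⟨le_of_mul_le_mul_left h4 hκpos, fun h => absurd h (by omega)⟩
      · -- k ≥ 3
        have hsplitsum : ∑ i ∈ Finset.range k, κ k i * Vv β U i
            = ∑ i ∈ Finset.Ico 1 k, κ k i * Vv β U i := by
          rw [Finset.range_eq_Ico, Finset.sum_eq_sum_Ico_succ_bot (by omega : 0 < k)]
          simp [hV0]
        have hsplit : κ k k * Vv β U k =
            (∑ i ∈ Finset.range (k + 1), κ k i * Vv β U i) -
              ∑ i ∈ Finset.Ico 1 k, κ k i * Vv β U i := by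
          rw [Finset.sum_range_succ, hsplitsum]; ring
        have e3 : ∑ i ∈ Finset.Ico 1 k, κ k i = -(κ k 0) - κ k k := by
          have h1 : ∑ i ∈ Finset.range (k + 1), κ k i
              = κ k 0 + (∑ i ∈ Finset.Ico 1 k, κ k i) + κ k k := by
            rw [Finset.sum_range_succ, Finset.range_eq_Ico,
              Finset.sum_eq_sum_Ico_succ_bot (by omega : 0 < k)]
          rw [h1] at hsum0; linarith
        have habs : κ k k * |Vv β U k| ≤
            |∑ i ∈ Finset.range (k + 1), κ k i * Vv β U i| +
              ∑ i ∈ Finset.Ico 1 k, (-(κ k i)) * |Vv β U i| := by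
          have h1 : κ k k * |Vv β U k| = |κ k k * Vv β U k| := by
            rw [abs_mul, abs_of_pos hκpos]
          rw [h1, hsplit]
          refine (abs_sub _ _).trans ?_
          gcongr
          refine (Finset.abs_sum_le_sum_abs _ _).trans ?_
          refine le_of_eq (Finset.sum_congr rfl fun i hi => ?_)
          rw [Finset.mem_Ico] at hi
          rw [abs_mul, abs_of_nonpos (hκle i hi.2)]
        have hsumb : ∑ i ∈ Finset.Ico 1 k, (-(κ k i)) * |Vv β U i|
            ≤ (κ k 0 + κ k k) * (2 * G / c0) := by
          calc ∑ i ∈ Finset.Ico 1 k, (-(κ k i)) * |Vv β U i|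
              ≤ ∑ i ∈ Finset.Ico 1 k, (-(κ k i)) * (2 * G / c0) := by
                refine Finset.sum_le_sum fun i hi => ?_
                rw [Finset.mem_Ico] at hi
                have hneg : 0 ≤ -(κ k i) := by linarith [hκle i hi.2]
                exact mul_le_mul_of_nonneg_left
                  ((ih i hi.2 (le_trans hi.2.le hkm)).1) hneg
            _ = (κ k 0 + κ k k) * (2 * G / c0) := by
                rw [← Finset.sum_mul]
                congr 1
                rw [Finset.sum_neg_distrib, e3]; ring
        have hx : t k ^ (-α) = (t k ^ α)⁻¹ := hrpinv k hk1 hkM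
        have hxpos : (0:ℝ) < (t k ^ α)⁻¹ := by
          have := Real.rpow_pos_of_pos (tpos k hk1 hkM) α; positivity
        have hκ0' : c0 * (t k ^ α)⁻¹ ≤ -κ k 0 := by rw [← hx]; exact hκm0 k hk3 hkM
        have hKnn : (0:ℝ) ≤ 2 * G / c0 := by positivity
        have hprod : 2 * G / c0 * (c0 * (t k ^ α)⁻¹) ≤ 2 * G / c0 * (-κ k 0) :=
          mul_le_mul_of_nonneg_left hκ0' hKnn
        have he : 2 * G / c0 * (c0 * (t k ^ α)⁻¹) = 2 * G * (t k ^ α)⁻¹ := by field_simp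
        have h4 : κ k k * |Vv β U k| ≤ κ k k * (2 * G / c0) := by
          have hGx : 0 ≤ G * (t k ^ α)⁻¹ := by positivity
          have hc1 : κ k k * |Vv β U k|
              ≤ G * (t k ^ α)⁻¹ + (κ k 0 + κ k k) * (2 * G / c0) :=
            habs.trans (add_le_add hFk hsumb)
          have hc2 : 2 * G * (t k ^ α)⁻¹ ≤ 2 * G / c0 * (-κ k 0) := by linarith
          nlinarith [hc1, hc2, hGx]
        exact ⟨le_of_mul_le_mul_left h4 hκpos, fun h => absurd h (by omega)⟩
  have hUb : ∀ k, k ≤ m → |U k| ≤ 2 * G / c0 := by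
    intro k
    induction k with
    | zero => intro _; rw [hU0, abs_zero]; positivity
    | succ n ih =>
      intro hkm
      have hb := hβ (n + 1) (by omega) (hkm.trans hmM)
      have hVk := (key (n + 1) hkm).1
      have hUn := ih (by omega)
      have h1 : (0:ℝ) < 1 - β (n + 1) := by linarith [hb.2]
      have hVdef : Vv β U (n + 1) = (U (n + 1) - β (n + 1) * U n) / (1 - β (n + 1)) := by
        simp [Vv]
      have hUeq : U (n + 1) = (1 - β (n + 1)) * Vv β U (n + 1) + β (n + 1) * U n := by
        rw [hVdef]; field_simp; ring
      rw [hUeq]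
      calc |(1 - β (n + 1)) * Vv β U (n + 1) + β (n + 1) * U n|
          ≤ (1 - β (n + 1)) * |Vv β U (n + 1)| + β (n + 1) * |U n| := by
            refine (abs_add_le _ _).trans ?_
            rw [abs_mul, abs_mul, abs_of_pos h1, abs_of_nonneg hb.1]
        _ ≤ 2 * G / c0 := by
            nlinarith [mul_le_mul_of_nonneg_left hVk h1.le,
              mul_le_mul_of_nonneg_left hUn hb.1]
  have := hUb m le_rfl
  rw [show (2:ℝ) / c0 * G = 2 * G / c0 by ring]
  exact this
end
end
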